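/- Let U be a set with at least two elements, and let B be an atomless field of sets on U that separates points. Let A be the collection of all finite unions of rectangles X × Y with X, Y ∈ B. Then: (i) every a ∈ A that contains the off-diagonal {(u,v) : u ≠ v} equals U × U, so U × U is the least upper bound in A of the family S = {X × (U \ X) : X ∈ B}; (ii) the operation s(Z) = {(u,v) ∈ U × U : (u,u) ∈ Z} satisfies s(X × (U \ X)) = ∅ for every X ∈ B, while s(U × U) = U × U ≠ ∅. Hence s does not preserve the supremum of S in A (s is not completely additive on A). -/

import Mathlib

theorem stmt4 {U : Type*} (B : Set (Set U))
    (hex : ∃ u v : U, u ≠ v)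
    (huniv : Set.univ ∈ B)
    (hinter : ∀ X ∈ B, ∀ Y ∈ B, X ∩ Y ∈ B)
    (hunion : ∀ X ∈ B, ∀ Y ∈ B, X ∪ Y ∈ B)
    (hcompl : ∀ X ∈ B, Xᶜ ∈ B)
    (hatomless : ∀ X ∈ B, X ≠ ∅ → ∃ Y ∈ B, Y ≠ ∅ ∧ Y ⊂ X)
    (hsep : ∀ u v : U, u ≠ v → ∃ X ∈ B, u ∈ X ∧ v ∉ X)
    (A : Set (Set (U × U)))
    (hA : ∀ Z : Set (U × U), Z ∈ A ↔
      ∃ (n : ℕ) (X Y : Fin n → Set U), (∀ i, X i ∈ B) ∧ (∀ i, Y i ∈ B) ∧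
        Z = ⋃ i, X i ×ˢ Y i)
    (s : Set (U × U) → Set (U × U))
    (hs : ∀ Z : Set (U × U), s Z = {p : U × U | (p.1, p.1) ∈ Z}) :
    (∀ a ∈ A, {p : U × U | p.1 ≠ p.2} ⊆ a → a = Set.univ) ∧
    (Set.univ : Set (U × U)) ∈ A ∧
    (∀ a ∈ A, (∀ X ∈ B, X ×ˢ Xᶜ ⊆ a) → a = Set.univ) ∧
    (∀ X ∈ B, s (X ×ˢ Xᶜ) = ∅) ∧
    s Set.univ = Set.univ ∧
    (Set.univ : Set (U × U)) ≠ ∅ := by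
  -- closure of B under finite intersections
  have hbInter : ∀ (n : ℕ) (g : Fin n → Set U), (∀ i, g i ∈ B) →
      (⋂ i ∈ (Finset.univ : Finset (Fin n)), g i) ∈ B := by
    intro n g hg
    classical
    induction (Finset.univ : Finset (Fin n)) using Finset.induction with
    | empty => simpa using huniv
    | insert _ _ hni ih =>
      rw [Finset.set_biInter_insert]
      exact hinter _ (hg _) _ ih
  -- part (i)
  have key : ∀ a ∈ A, {p : U × U | p.1 ≠ p.2} ⊆ a → a = Set.univ := by
    intro a ha hsub
    rw [hA] at ha
    obtain ⟨n, X, Y, hX, hY, rfl⟩ := ha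
    ext ⟨u, v⟩
    simp only [Set.mem_univ, iff_true]
    by_cases huv : u ≠ v
    · exact hsub huv
    · push_neg at huv
      subst huv
      by_contra h
      classical
      set g : Fin n → Set U := fun i =>
        (if u ∈ X i then X i else (X i)ᶜ) ∩ (if u ∈ Y i then Y i else (Y i)ᶜ) with hg
      have hgB : ∀ i, g i ∈ B := by
        intro i
        apply hinter
        · split <;> [exact hX i; exact hcompl _ (hX i)]
        · split <;> [exact hY i; exact hcompl _ (hY i)]
      set C : Set U := ⋂ i ∈ (Finset.univ : Finset (Fin n)), g i with hC
      have hCB : C ∈ B := hbInter n g hgB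
      have huC : u ∈ C := by
        simp only [hC, Set.mem_iInter]
        intro i _
        constructor <;> split <;> simp_all
      have hCne : C ≠ ∅ := fun he => (he ▸ huC : u ∈ (∅ : Set U))
      obtain ⟨Z, hZB, hZne, hZC⟩ := hatomless C hCB hCne
      obtain ⟨y, hy⟩ := Set.nonempty_iff_ne_empty.2 hZne
      obtain ⟨x, hxC, hxZ⟩ := Set.exists_of_ssubset hZC
      have hyC : y ∈ C := hZC.1 hy
      have hxy : x ≠ y := fun e => hxZ (e ▸ hy)
      have hxyA : (x, y) ∈ ⋃ i, X i ×ˢ Y i := hsub hxy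
      obtain ⟨i, hi⟩ := Set.mem_iUnion.1 hxyA
      obtain ⟨hx1, hy1⟩ := hi
      -- x ∈ C gives u ∈ X i, y ∈ C gives u ∈ Y i
      have hxg : x ∈ g i := by
        have := Set.mem_iInter.1 hxC i
        simpa using Set.mem_iInter.1 this (Finset.mem_univ i)
      have hyg : y ∈ g i := by
        have := Set.mem_iInter.1 hyC i
        simpa using Set.mem_iInter.1 this (Finset.mem_univ i)
      have huX : u ∈ X i := by
        rcases hxg with ⟨h1, _⟩
        by_contra hnot
        rw [if_neg hnot] at h1
        exact h1 hx1
      have huY : u ∈ Y i := by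
        rcases hyg with ⟨_, h2⟩
        by_contra hnot
        rw [if_neg hnot] at h2
        exact h2 hy1
      exact h (Set.mem_iUnion.2 ⟨i, ⟨huX, huY⟩⟩)
  refine ⟨key, ?_, ?_, ?_, ?_, ?_⟩
  · rw [hA]
    exact ⟨1, fun _ => Set.univ, fun _ => Set.univ, fun _ => huniv, fun _ => huniv,
      by simp [Set.univ_prod_univ, Set.iUnion_const]⟩
  · intro a ha hrect
    apply key a ha
    intro ⟨u, v⟩ huv
    obtain ⟨X, hXB, huX, hvX⟩ := hsep u v huv
    exact hrect X hXB ⟨huX, hvX⟩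
  · intro X hXB
    rw [hs]
    ext ⟨u, v⟩
    simp
  · rw [hs]; ext p; simp
  · obtain ⟨u, v, _⟩ := hex
    exact fun he => (he ▸ Set.mem_univ ((u, u) : U × U) : ((u, u) : U × U) ∈ (∅ : Set (U × U)))
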